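/- Let z ∈ ℤ[ω] with N(z) = A·B where A, B are positive integers and A = r²t with t having no prime divisor ≡ 2 (mod 3). Then there exist f, g ∈ ℤ[ω] with z = f·g, N(f) = A, and N(g) = B. -/

import Mathlib

noncomputable def ω : ℂ := (-1 + Real.sqrt 3 * Complex.I) / 2

noncomputable def Eisen : Subring ℂ := Subring.closure {ω}

lemma omega_eq : ω = ((-1/2 : ℝ) : ℂ) + ((Real.sqrt 3 / 2 : ℝ) : ℂ) * Complex.I := by
  rw [ω]; push_cast; ring

lemma omega_re : ω.re = -1/2 := by rw [omega_eq]; simp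

lemma omega_im : ω.im = Real.sqrt 3 / 2 := by rw [omega_eq]; simp

lemma sqrt3_sq : Real.sqrt 3 * Real.sqrt 3 = 3 := by
  exact Real.mul_self_sqrt (by norm_num)

lemma omega_sq : ω ^ 2 = -1 - ω := by
  apply Complex.ext
  · simp [pow_two, Complex.mul_re, omega_re, omega_im, Complex.sub_re, Complex.neg_re,
      Complex.one_re]
    nlinarith [sqrt3_sq]
  · simp [pow_two, Complex.mul_im, omega_re, omega_im]; ring

lemma normSq_add_mul_omega (s t : ℝ) :
    Complex.normSq ((s:ℂ) + t * ω) = s^2 - s*t + t^2 := by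
  simp [Complex.normSq_apply, Complex.add_re, Complex.add_im, Complex.mul_re, Complex.mul_im,
    omega_re, omega_im, Complex.ofReal_re, Complex.ofReal_im]
  nlinarith [sqrt3_sq]

lemma omega_im_ne : ω.im ≠ 0 := by
  rw [omega_im]
  positivity

lemma add_mul_omega_eq_zero {s t : ℝ} (h : (s:ℂ) + t * ω = 0) : s = 0 ∧ t = 0 := by
  have him : t = 0 ∨ ω.im = 0 := by
    have := congrArg Complex.im h
    simpa [Complex.add_im, Complex.mul_im, Complex.ofReal_im, Complex.ofReal_re] using this
  have ht : t = 0 := him.resolve_right omega_im_ne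
  subst ht
  have := congrArg Complex.re h
  simp [Complex.add_re, Complex.mul_re, Complex.ofReal_im, Complex.ofReal_re] at this
  exact ⟨this, rfl⟩

lemma add_mul_omega_inj {a b c d : ℝ} (h : (a:ℂ) + b * ω = c + d * ω) : a = c ∧ b = d := by
  have h0 : ((a - c : ℝ) : ℂ) + (b - d : ℝ) * ω = 0 := by push_cast; linear_combination h
  have := add_mul_omega_eq_zero h0
  constructor <;> linarith [this.1, this.2]

lemma mem_eisen (a b : ℤ) : (a : ℂ) + b * ω ∈ Eisen := by
  have hω : ω ∈ Eisen := Subring.subset_closure rfl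
  exact Subring.add_mem _ (intCast_mem Eisen a) (Subring.mul_mem _ (intCast_mem Eisen b) hω)

noncomputable def toE (a b : ℤ) : Eisen := ⟨(a : ℂ) + b * ω, mem_eisen a b⟩

lemma exists_rep (z : Eisen) : ∃ a b : ℤ, z = toE a b := by
  obtain ⟨x, hx⟩ := z
  refine Subring.closure_induction ?_ ?_ ?_ ?_ ?_ ?_ hx
  · rintro y rfl
    exact ⟨0, 1, by simp [toE, Subtype.ext_iff]⟩
  · exact ⟨0, 0, by simp [toE, Subtype.ext_iff]⟩
  · exact ⟨1, 0, by simp [toE, Subtype.ext_iff]⟩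
  · rintro x y hx hy ⟨a, b, ha⟩ ⟨c, d, hc⟩
    refine ⟨a + c, b + d, ?_⟩
    rw [Subtype.ext_iff] at ha hc ⊢
    simp only [toE] at *
    push_cast
    rw [ha, hc]; ring
  · rintro x hx ⟨a, b, ha⟩
    refine ⟨-a, -b, ?_⟩
    rw [Subtype.ext_iff] at ha ⊢
    simp only [toE] at *
    push_cast
    rw [ha]; ring
  · rintro x y hx hy ⟨a, b, ha⟩ ⟨c, d, hc⟩
    refine ⟨a * c - b * d, a * d + b * c - b * d, ?_⟩
    rw [Subtype.ext_iff] at ha hc ⊢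
    simp only [toE] at *
    push_cast
    rw [ha, hc]
    linear_combination ((b : ℂ) * d) * omega_sq

lemma toE_inj {a b c d : ℤ} (h : toE a b = toE c d) : a = c ∧ b = d := by
  rw [Subtype.ext_iff] at h
  simp only [toE] at h
  have h' : ((a:ℝ):ℂ) + (b:ℝ) * ω = ((c:ℝ):ℂ) + (d:ℝ) * ω := by push_cast at h ⊢; exact h
  obtain ⟨h1, h2⟩ := add_mul_omega_inj h'
  exact ⟨by exact_mod_cast h1, by exact_mod_cast h2⟩

lemma toE_mul (a b c d : ℤ) :
    toE a b * toE c d = toE (a*c - b*d) (a*d + b*c - b*d) := by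
  rw [Subtype.ext_iff]
  show ((a:ℂ) + b*ω) * ((c:ℂ) + d*ω) = _
  simp only [toE]
  push_cast
  linear_combination ((b : ℂ) * d) * omega_sq

lemma toE_intCast (n : ℤ) : (n : Eisen) = toE n 0 := by
  rw [Subtype.ext_iff]
  simp [toE]

lemma toE_natCast (n : ℕ) : (n : Eisen) = toE n 0 := by
  rw [Subtype.ext_iff]
  simp [toE]

lemma normSq_toE (a b : ℤ) :
    Complex.normSq ((toE a b : Eisen) : ℂ) = ((a^2 - a*b + b^2 : ℤ) : ℝ) := by
  show Complex.normSq ((a:ℂ) + b*ω) = _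
  have : ((a:ℤ):ℂ) + ((b:ℤ):ℂ) * ω = ((a:ℝ):ℂ) + ((b:ℝ):ℂ) * ω := by push_cast; ring
  rw [this, normSq_add_mul_omega]
  push_cast
  ring

lemma norm_nonneg_int (a b : ℤ) : 0 ≤ a^2 - a*b + b^2 := by nlinarith [sq_nonneg (a-b), sq_nonneg a, sq_nonneg b]

lemma exists_norm (z : Eisen) : ∃ n : ℕ, Complex.normSq (z : ℂ) = n := by
  obtain ⟨a, b, rfl⟩ := exists_rep z
  refine ⟨(a^2 - a*b + b^2).toNat, ?_⟩
  rw [normSq_toE]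
  have h : ((a^2 - a*b + b^2).toNat : ℤ) = a^2 - a*b + b^2 := Int.toNat_of_nonneg (norm_nonneg_int a b)
  exact_mod_cast congrArg (Int.cast : ℤ → ℝ) h.symm

noncomputable def EN (z : Eisen) : ℕ := (exists_norm z).choose

lemma EN_spec (z : Eisen) : Complex.normSq (z : ℂ) = EN z := (exists_norm z).choose_spec

lemma EN_eq_iff {z : Eisen} {n : ℕ} : EN z = n ↔ Complex.normSq (z : ℂ) = n := by
  rw [EN_spec z]
  exact_mod_cast Nat.cast_inj (R := ℝ)

lemma EN_mul (x y : Eisen) : EN (x * y) = EN x * EN y := by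
  rw [EN_eq_iff]
  push_cast
  rw [← EN_spec, ← EN_spec]
  exact Complex.normSq_mul x y

lemma EN_eq_zero_iff {z : Eisen} : EN z = 0 ↔ z = 0 := by
  rw [EN_eq_iff, Nat.cast_zero, Complex.normSq_eq_zero]
  exact ⟨fun h => Subtype.ext h, fun h => by rw [h]; rfl⟩

lemma EN_one : EN (1 : Eisen) = 1 := by rw [EN_eq_iff]; simp

lemma EN_natCast (n : ℕ) : EN (n : Eisen) = n^2 := by
  rw [EN_eq_iff, toE_natCast, normSq_toE]
  push_cast
  ring

lemma toE_conj_mem (z : Eisen) : (starRingEnd ℂ) (z : ℂ) ∈ Eisen := by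
  obtain ⟨a, b, rfl⟩ := exists_rep z
  show (starRingEnd ℂ) ((a:ℂ) + b*ω) ∈ Eisen
  have hω : (starRingEnd ℂ) ω = -1 - ω := by
    conv_lhs => rw [omega_eq]
    rw [map_add, map_mul, Complex.conj_I, Complex.conj_ofReal, Complex.conj_ofReal, omega_eq]
    push_cast
    ring
  have : (starRingEnd ℂ) ((a:ℂ) + b*ω) = ((a - b : ℤ) : ℂ) + ((-b : ℤ) : ℂ) * ω := by
    rw [map_add, map_mul, hω]
    push_cast
    simp
    ring
  rw [this]
  exact mem_eisen _ _

noncomputable def econj (z : Eisen) : Eisen := ⟨(starRingEnd ℂ) (z : ℂ), toE_conj_mem z⟩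

lemma econj_coe (z : Eisen) : ((econj z : Eisen) : ℂ) = (starRingEnd ℂ) (z : ℂ) := rfl

lemma EN_econj (z : Eisen) : EN (econj z) = EN z := by
  rw [EN_eq_iff, econj_coe, Complex.normSq_conj, EN_spec]

lemma econj_mul (x y : Eisen) : econj (x * y) = econj x * econj y := by
  rw [Subtype.ext_iff]
  simp [econj_coe]

lemma econj_econj (z : Eisen) : econj (econj z) = z := by
  rw [Subtype.ext_iff]
  simp [econj_coe]

lemma mul_econj (z : Eisen) : z * econj z = (EN z : Eisen) := by
  rw [Subtype.ext_iff]
  push_cast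
  rw [econj_coe, Complex.mul_conj, EN_spec]
  norm_cast

lemma isUnit_iff_EN {z : Eisen} : IsUnit z ↔ EN z = 1 := by
  constructor
  · rintro ⟨u, rfl⟩
    have := EN_mul (u : Eisen) ((u⁻¹ : Eisenˣ) : Eisen)
    rw [← Units.val_mul, mul_inv_cancel, Units.val_one, EN_one] at this
    exact Nat.eq_one_of_mul_eq_one_right this.symm
  · intro h
    refine IsUnit.of_mul_eq_one (econj z) ?_
    rw [mul_econj, h, Nat.cast_one]

lemma EN_natCast_dvd {p : ℕ} {z : Eisen} (a b : ℤ) (hz : z = toE a b)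
    (h : (p : Eisen) ∣ z) : (p : ℤ) ∣ a ∧ (p : ℤ) ∣ b := by
  obtain ⟨w, hw⟩ := h
  obtain ⟨c, d, rfl⟩ := exists_rep w
  rw [hz, toE_natCast, toE_mul] at hw
  obtain ⟨h1, h2⟩ := toE_inj hw
  constructor
  · exact ⟨c, by linarith⟩
  · exact ⟨d, by linarith⟩

lemma natCast_dvd_toE {p : ℕ} {a b : ℤ} (ha : (p:ℤ) ∣ a) (hb : (p:ℤ) ∣ b) :
    (p : Eisen) ∣ toE a b := by
  obtain ⟨c, rfl⟩ := ha
  obtain ⟨d, rfl⟩ := hb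
  exact ⟨toE c d, by rw [toE_natCast, toE_mul]; congr 1 <;> ring⟩

instance : IsDomain Eisen := inferInstance

noncomputable def edQ (x y : Eisen) : Eisen :=
  toE (round (((x:ℂ)/(y:ℂ)).re + ((x:ℂ)/(y:ℂ)).im / Real.sqrt 3))
      (round (((x:ℂ)/(y:ℂ)).im * 2 / Real.sqrt 3))

lemma sqrt3_pos : (0:ℝ) < Real.sqrt 3 := Real.sqrt_pos.mpr (by norm_num)

lemma c_decomp (c : ℂ) :
    ((c.re + c.im / Real.sqrt 3 : ℝ) : ℂ) + ((c.im * 2 / Real.sqrt 3 : ℝ) : ℂ) * ω = c := by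
  apply Complex.ext
  · simp [Complex.add_re, Complex.mul_re, omega_re, omega_im, Complex.ofReal_re, Complex.ofReal_im]
    field_simp
    nlinarith [sqrt3_sq, sqrt3_pos]
  · simp [Complex.add_im, Complex.mul_im, omega_re, omega_im, Complex.ofReal_re, Complex.ofReal_im]
    field_simp

lemma edQ_close (x y : Eisen) (hy : y ≠ 0) :
    Complex.normSq ((x:ℂ) - (y:ℂ) * (edQ x y : ℂ)) ≤ 3/4 * Complex.normSq (y:ℂ) := by
  set c : ℂ := (x:ℂ)/(y:ℂ) with hc
  set u : ℝ := c.re + c.im / Real.sqrt 3 with hu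
  set v : ℝ := c.im * 2 / Real.sqrt 3 with hv
  have hy0 : (y:ℂ) ≠ 0 := fun h => hy (Subtype.ext h)
  have hxy : (x:ℂ) = (y:ℂ) * c := by rw [hc]; field_simp
  have hq : ((edQ x y : Eisen) : ℂ) = ((round u : ℝ):ℂ) + ((round v : ℝ):ℂ) * ω := by
    show ((round u : ℤ):ℂ) + ((round v : ℤ):ℂ) * ω = _
    push_cast
    ring
  have key : (x:ℂ) - (y:ℂ) * (edQ x y : ℂ) = (y:ℂ) * (((u - round u : ℝ):ℂ) + ((v - round v : ℝ):ℂ) * ω) := by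
    rw [hxy, hq]
    have := c_decomp c
    rw [← hu, ← hv] at this
    rw [← this]
    push_cast
    ring
  rw [key, Complex.normSq_mul, normSq_add_mul_omega]
  have h1 : |u - round u| ≤ 1/2 := abs_sub_round u
  have h2 : |v - round v| ≤ 1/2 := abs_sub_round v
  rw [abs_le] at h1 h2
  have hn : 0 ≤ Complex.normSq (y:ℂ) := Complex.normSq_nonneg _
  rw [mul_comm (3/4 : ℝ)]
  apply mul_le_mul_of_nonneg_left _ hn
  nlinarith [h1.1, h1.2, h2.1, h2.2]

lemma edQ_lt (x y : Eisen) (hy : y ≠ 0) : EN (x - y * edQ x y) < EN y := by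
  have hy0 : EN y ≠ 0 := fun h => hy (EN_eq_zero_iff.mp h)
  have h := edQ_close x y hy
  have hcast : Complex.normSq (((x - y * edQ x y : Eisen)) : ℂ) = (EN (x - y * edQ x y) : ℝ) := EN_spec _
  have hcast2 : Complex.normSq ((y:Eisen) : ℂ) = (EN y : ℝ) := EN_spec _
  have hco : ((x - y * edQ x y : Eisen) : ℂ) = (x:ℂ) - (y:ℂ) * (edQ x y : ℂ) := by push_cast; ring
  rw [hco] at hcast
  rw [hcast, hcast2] at h
  have : (EN (x - y * edQ x y) : ℝ) < EN y := by
    have hpos : (0:ℝ) < EN y := by positivity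
    nlinarith
  exact_mod_cast this

noncomputable instance : EuclideanDomain Eisen where
  quotient := edQ
  quotient_zero := fun a => by
    have h0 : ((0 : Eisen) : ℂ) = 0 := rfl
    simp only [edQ, h0, div_zero, Complex.zero_re, Complex.zero_im, zero_div, zero_add,
      zero_mul, round_zero]
    rw [Subtype.ext_iff]
    show ((0:ℤ):ℂ) + ((0:ℤ):ℂ) * ω = ((0 : Eisen) : ℂ)
    simp
  remainder := fun a b => a - b * edQ a b
  quotient_mul_add_remainder_eq := fun a b => by ring
  r := fun a b => EN a < EN b
  r_wellFounded := InvImage.wf EN Nat.lt_wfRel.wf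
  remainder_lt := fun a b hb => edQ_lt a b hb
  mul_left_not_lt := fun a b hb => by
    intro h
    rw [EN_mul] at h
    have hb0 : EN b ≠ 0 := fun h' => hb (EN_eq_zero_iff.mp h')
    have : EN a * 1 ≤ EN a * EN b := Nat.mul_le_mul_left _ (Nat.one_le_iff_ne_zero.mpr hb0)
    omega

example : UniqueFactorizationMonoid Eisen := inferInstance

lemma no_cube_root (p : ℕ) (hp : p.Prime) (hp3 : p % 3 = 2) (u : ZMod p)
    (h : u^2 + u + 1 = 0) : False := by
  haveI : Fact p.Prime := ⟨hp⟩
  have hu0 : u ≠ 0 := by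
    rintro rfl
    simp at h
  have hu1 : u ≠ 1 := by
    rintro rfl
    have h3 : ((3 : ℕ) : ZMod p) = 0 := by push_cast; linear_combination h
    have hd : (p : ℕ) ∣ 3 := (ZMod.natCast_eq_zero_iff 3 p).mp h3
    have := Nat.le_of_dvd (by norm_num) hd
    interval_cases p <;> omega
  have hcube : u ^ 3 = 1 := by linear_combination (u - 1) * h
  obtain ⟨v, hv⟩ := IsUnit.exists_left_inv (Ne.isUnit hu0)
  set w : (ZMod p)ˣ := (Ne.isUnit hu0).unit with hw
  have hw3 : w ^ 3 = 1 := by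
    ext
    push_cast
    simpa [hw] using hcube
  have hord : orderOf w ∣ 3 := orderOf_dvd_of_pow_eq_one hw3
  have hword : orderOf w = 3 := by
    rcases (Nat.dvd_prime (by norm_num)).mp hord with h1 | h3
    · exfalso
      have hw1 : w = 1 := orderOf_eq_one_iff.mp h1
      apply hu1
      have : ((w : (ZMod p)ˣ) : ZMod p) = 1 := by rw [hw1]; rfl
      rwa [hw, IsUnit.unit_spec] at this
    · exact h3
  have hcard : orderOf w ∣ Fintype.card (ZMod p)ˣ := orderOf_dvd_card
  rw [hword, ZMod.card_units_eq_totient, Nat.totient_prime hp] at hcard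
  omega

lemma inert_dvd (p : ℕ) (hp : p.Prime) (hp3 : p % 3 = 2) (a b : ℤ)
    (h : (p:ℤ) ∣ a^2 - a*b + b^2) : (p:ℤ) ∣ a ∧ (p:ℤ) ∣ b := by
  haveI : Fact p.Prime := ⟨hp⟩
  have h0 : (a : ZMod p)^2 - (a : ZMod p)*(b : ZMod p) + (b : ZMod p)^2 = 0 := by
    have := (ZMod.intCast_zmod_eq_zero_iff_dvd _ p).mpr h
    push_cast at this
    linear_combination this
  have hb : (b : ZMod p) = 0 := by
    by_contra hbne
    have hbu := (Ne.isUnit hbne)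
    set y := (b : ZMod p)
    set u : ZMod p := -((a : ZMod p) * y⁻¹) with hu
    apply no_cube_root p hp hp3 u
    have hyinv : y * y⁻¹ = 1 := ZMod.mul_inv_of_unit y hbu
    rw [hu]
    linear_combination (y⁻¹)^2 * h0 + ((a : ZMod p)*y⁻¹ - 1 - y*y⁻¹) * hyinv
  have ha : (a : ZMod p) = 0 := by
    rw [hb] at h0
    have h2 : (a : ZMod p)^2 = 0 := by linear_combination h0
    exact pow_eq_zero_iff (n := 2) (by norm_num) |>.mp h2
  exact ⟨(ZMod.intCast_zmod_eq_zero_iff_dvd _ p).mp ha, (ZMod.intCast_zmod_eq_zero_iff_dvd _ p).mp hb⟩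

lemma EN_toE (a b : ℤ) : (EN (toE a b) : ℤ) = a^2 - a*b + b^2 := by
  have h := normSq_toE a b
  rw [EN_spec] at h
  exact_mod_cast h

lemma econj_toE (a b : ℤ) : econj (toE a b) = toE (a - b) (-b) := by
  rw [Subtype.ext_iff]
  show (starRingEnd ℂ) ((a:ℂ) + b*ω) = ((a - b : ℤ):ℂ) + ((-b : ℤ):ℂ) * ω
  have hω : (starRingEnd ℂ) ω = -1 - ω := by
    conv_lhs => rw [omega_eq]
    rw [map_add, map_mul, Complex.conj_I, Complex.conj_ofReal, Complex.conj_ofReal, omega_eq]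
    push_cast
    ring
  rw [map_add, map_mul, hω]
  push_cast
  simp
  ring

lemma EN_natCast_ne_unit {p : ℕ} (hp : 2 ≤ p) : ¬ IsUnit (p : Eisen) := by
  rw [isUnit_iff_EN, EN_natCast]
  nlinarith

lemma natCast_ne_zero {p : ℕ} (hp : 0 < p) : (p : Eisen) ≠ 0 := by
  intro h
  have := EN_eq_zero_iff.mpr h
  rw [EN_natCast] at this
  nlinarith

lemma exists_prime_norm (p : ℕ) (hp : p.Prime) (hp3 : p % 3 ≠ 2) :
    ∃ π : Eisen, EN π = p := by
  by_cases h3 : p = 3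
  · refine ⟨toE 1 (-1), ?_⟩
    have := EN_toE 1 (-1)
    omega
  · have hp1 : p % 3 = 1 := by
      have hlt : p % 3 < 3 := Nat.mod_lt p (by norm_num)
      interval_cases h : p % 3
      · exfalso
        have h3d : 3 ∣ p := Nat.dvd_of_mod_eq_zero h
        rcases (Nat.Prime.eq_one_or_self_of_dvd hp 3 h3d) with h' | h' <;> omega
      · rfl
      · omega
    haveI : Fact p.Prime := ⟨hp⟩
    have hcard : 3 ∣ Fintype.card (ZMod p)ˣ := by
      rw [ZMod.card_units_eq_totient, Nat.totient_prime hp]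
      omega
    haveI : Fact (Nat.Prime 3) := ⟨by norm_num⟩
    obtain ⟨g, hg⟩ := exists_prime_orderOf_dvd_card 3 hcard
    set u : ZMod p := (g : ZMod p) with hudef
    have hu3 : u ^ 3 = 1 := by
      rw [hudef, ← Units.val_pow_eq_pow_val, ← hg, pow_orderOf_eq_one, Units.val_one]
    have hu1 : u ≠ 1 := by
      intro h
      have : g = 1 := Units.ext (by rw [← hudef]; exact h)
      rw [this, orderOf_one] at hg
      norm_num at hg
    have hquad : u^2 + u + 1 = 0 := by
      have : (u - 1) * (u^2 + u + 1) = 0 := by linear_combination hu3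
      rcases mul_eq_zero.mp this with h | h
      · exact absurd (by linear_combination h) hu1
      · exact h
    set c : ℤ := (u.val : ℤ) with hcdef
    have hcu : (c : ZMod p) = u := by
      rw [hcdef]
      push_cast
      exact ZMod.natCast_rightInverse u
    have hdvd : (p : ℤ) ∣ c^2 + c + 1 := by
      rw [← ZMod.intCast_zmod_eq_zero_iff_dvd]
      push_cast
      rw [hcu]
      exact hquad
    -- p divides EN (toE c (-1)) = c^2 + c + 1
    set ξ : Eisen := toE c (-1) with hxi
    have hENξ : (p : ℕ) ∣ EN ξ := by
      have h1 : (EN ξ : ℤ) = c^2 + c + 1 := by rw [hxi, EN_toE]; ring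
      have : (p : ℤ) ∣ (EN ξ : ℤ) := h1 ▸ hdvd
      exact_mod_cast this
    have hpdvd : (p : Eisen) ∣ ξ * econj ξ := by
      rw [mul_econj]
      obtain ⟨k, hk⟩ := hENξ
      exact ⟨(k : Eisen), by rw [hk]; push_cast; ring⟩
    have hple : (1:ℤ) < (p:ℤ) := by exact_mod_cast hp.one_lt
    have hnd1 : ¬ (p : Eisen) ∣ ξ := by
      intro h
      have h2 := (EN_natCast_dvd c (-1) rfl h).2
      rw [Int.dvd_neg] at h2
      have := Int.le_of_dvd one_pos h2
      omega
    have hnd2 : ¬ (p : Eisen) ∣ econj ξ := by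
      intro h
      rw [hxi, econj_toE] at h
      have h2 := (EN_natCast_dvd _ _ rfl h).2
      rw [Int.dvd_neg, Int.dvd_neg] at h2
      have := Int.le_of_dvd one_pos h2
      omega
    have hnp : ¬ Prime (p : Eisen) := fun hpr => ((hpr.2.2 ξ (econj ξ) hpdvd).elim hnd1 hnd2)
    have hni : ¬ Irreducible (p : Eisen) :=
      fun hirr => hnp (UniqueFactorizationMonoid.irreducible_iff_prime.mp hirr)
    rw [irreducible_iff, not_and] at hni
    have hnu : ¬ IsUnit (p : Eisen) := EN_natCast_ne_unit hp.two_le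
    have := hni hnu
    push_neg at this
    obtain ⟨x, y, hxy, hx, hy⟩ := this
    have hprod : EN x * EN y = p^2 := by
      rw [← EN_mul, ← hxy, EN_natCast]
    have hx1 : EN x ≠ 1 := fun h => hx (isUnit_iff_EN.mpr h)
    have hy1 : EN y ≠ 1 := fun h => hy (isUnit_iff_EN.mpr h)
    have hdx : EN x ∣ p^2 := ⟨EN y, hprod.symm⟩
    rcases (Nat.dvd_prime_pow hp).mp hdx with ⟨m, hm, hEN⟩
    interval_cases m
    · exact absurd (by simpa using hEN) hx1
    · exact ⟨x, by simpa using hEN⟩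
    · exfalso
      rw [hEN] at hprod
      have hppos : 0 < p := hp.pos
      have hp2 : p^2 ≠ 0 := by positivity
      have : EN y = 1 := by
        have := Nat.eq_of_mul_eq_mul_left (Nat.pos_of_ne_zero hp2) (by linarith [hprod] : p^2 * EN y = p^2 * 1)
        omega
      exact hy1 this

lemma prime_of_EN_prime {π : Eisen} {p : ℕ} (hp : p.Prime) (h : EN π = p) : Prime π := by
  rw [← UniqueFactorizationMonoid.irreducible_iff_prime]
  constructor
  · rw [isUnit_iff_EN, h]
    exact hp.one_lt.ne'
  · intro a b hab
    have : EN a * EN b = p := by rw [← EN_mul, ← hab, h]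
    rcases (Nat.Prime.eq_one_or_self_of_dvd hp (EN a) ⟨EN b, this.symm⟩) with h1 | h1
    · exact Or.inl (isUnit_iff_EN.mpr h1)
    · right
      rw [isUnit_iff_EN]
      have hpos : 0 < p := hp.pos
      rw [h1] at this
      have : p * EN b = p * 1 := by omega
      exact Nat.eq_of_mul_eq_mul_left hpos this

lemma exists_prime_dvd (p : ℕ) (hp : p.Prime) (hp3 : p % 3 ≠ 2) (z : Eisen)
    (hdvd : p ∣ EN z) : ∃ π : Eisen, EN π = p ∧ π ∣ z := by
  obtain ⟨π, hπ⟩ := exists_prime_norm p hp hp3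
  have hprime : Prime π := prime_of_EN_prime hp hπ
  have hπp : π ∣ (p : Eisen) := by
    refine ⟨econj π, ?_⟩
    rw [mul_econj, hπ]
  have hzz : π ∣ z * econj z := by
    rw [mul_econj]
    obtain ⟨k, hk⟩ := hdvd
    exact dvd_trans hπp ⟨(k : Eisen), by rw [hk]; push_cast; ring⟩
  rcases hprime.2.2 _ _ hzz with h | h
  · exact ⟨π, hπ, h⟩
  · refine ⟨econj π, by rw [EN_econj, hπ], ?_⟩
    obtain ⟨w, hw⟩ := h
    refine ⟨econj w, ?_⟩
    have := congrArg econj hw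
    rwa [econj_econj, econj_mul] at this

lemma inert_dvd_E (p : ℕ) (hp : p.Prime) (hp3 : p % 3 = 2) (z : Eisen)
    (h : p ∣ EN z) : (p : Eisen) ∣ z := by
  obtain ⟨a, b, rfl⟩ := exists_rep z
  have hint : (p : ℤ) ∣ a^2 - a*b + b^2 := by
    rw [← EN_toE]
    exact_mod_cast Int.natCast_dvd_natCast.mpr h
  obtain ⟨ha, hb⟩ := inert_dvd p hp hp3 a b hint
  exact natCast_dvd_toE ha hb

lemma even_sub_even {m n : ℕ} (hm : Even m) (hn : Even n) : Even (m - n) := by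
  rw [Nat.even_iff] at *
  omega

theorem main_ind (A : ℕ) : ∀ (B : ℕ) (z : Eisen), 0 < A → 0 < B →
    (∀ q, Nat.Prime q → q % 3 = 2 → Even (A.factorization q)) → EN z = A * B →
    ∃ f g : Eisen, z = f * g ∧ EN f = A ∧ EN g = B := by
  induction A using Nat.strong_induction_on with
  | _ A IH =>
  intro B z hA hB hfac hEN
  by_cases hA1 : A = 1
  · subst hA1
    exact ⟨1, z, by rw [one_mul], EN_one, by rw [hEN, one_mul]⟩
  · set p := A.minFac with hpdef
    have hp : p.Prime := Nat.minFac_prime hA1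
    have hpA : p ∣ A := Nat.minFac_dvd A
    have hpEN : p ∣ EN z := by rw [hEN]; exact Dvd.dvd.mul_right hpA B
    have hp2 : 2 ≤ p := hp.two_le
    by_cases hp3 : p % 3 = 2
    · -- inert case
      have heven := hfac p hp hp3
      have hfp : 1 ≤ A.factorization p :=
        (Nat.Prime.factorization_pos_of_dvd hp hA.ne' hpA)
      have hfp2 : 2 ≤ A.factorization p := by
        rcases heven with ⟨k, hk⟩
        omega
      have hp2dvd : p^2 ∣ A := (Nat.Prime.pow_dvd_iff_le_factorization hp hA.ne').mpr hfp2
      obtain ⟨A', hA'⟩ := hp2dvd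
      have hA'pos : 0 < A' := Nat.pos_of_ne_zero (by rintro rfl; omega)
      have hA'lt : A' < A := by
        rw [hA']
        exact (Nat.lt_mul_iff_one_lt_left hA'pos).mpr (Nat.one_lt_pow two_ne_zero (by omega))
      have hpz : (p : Eisen) ∣ z := inert_dvd_E p hp hp3 z hpEN
      obtain ⟨w, hw⟩ := hpz
      have hENw : EN w = A' * B := by
        have h1 : EN z = p^2 * EN w := by
          rw [hw, EN_mul, EN_natCast]
        rw [hEN, hA'] at h1
        have : p^2 * (A' * B) = p^2 * EN w := by rw [← h1]; ring
        exact (Nat.eq_of_mul_eq_mul_left (by positivity) this).symm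
      have hfac' : ∀ q, Nat.Prime q → q % 3 = 2 → Even (A'.factorization q) := by
        intro q hq hq3
        have hdvd : p^2 ∣ A := ⟨A', hA'⟩
        have hfd : A'.factorization = A.factorization - (p^2).factorization := by
          have : A' = A / p^2 := by rw [hA']; rw [Nat.mul_div_cancel_left _ (by positivity : 0 < p^2)]
          rw [this, Nat.factorization_div hdvd]
        have hval : A'.factorization q = A.factorization q - (p^2).factorization q := by
          rw [hfd]; rfl
        rw [hval]
        apply even_sub_even (hfac q hq hq3)
        rw [Nat.factorization_pow]
        exact ⟨p.factorization q, by simp [two_mul]⟩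
      obtain ⟨f', g', hfg, hf', hg'⟩ := IH A' hA'lt B w hA'pos hB hfac' hENw
      refine ⟨(p : Eisen) * f', g', ?_, ?_, hg'⟩
      · rw [hw, hfg, mul_assoc]
      · rw [EN_mul, EN_natCast, hf', hA']
    · -- split case
      obtain ⟨π, hπ, hπz⟩ := exists_prime_dvd p hp hp3 z hpEN
      obtain ⟨A', hA'⟩ := hpA
      have hA'pos : 0 < A' := Nat.pos_of_ne_zero (by rintro rfl; omega)
      have hA'lt : A' < A := by
        rw [hA']
        exact (Nat.lt_mul_iff_one_lt_left hA'pos).mpr (by omega)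
      obtain ⟨w, hw⟩ := hπz
      have hENw : EN w = A' * B := by
        have h1 : EN z = p * EN w := by rw [hw, EN_mul, hπ]
        rw [hEN, hA'] at h1
        have : p * (A' * B) = p * EN w := by rw [← h1]; ring
        exact (Nat.eq_of_mul_eq_mul_left (by omega) this).symm
      have hfac' : ∀ q, Nat.Prime q → q % 3 = 2 → Even (A'.factorization q) := by
        intro q hq hq3
        have hqp : q ≠ p := by intro h; rw [h] at hq3; omega
        have hfd : A'.factorization = A.factorization - p.factorization := by
          have : A' = A / p := by rw [hA']; rw [Nat.mul_div_cancel_left _ (by omega : 0 < p)]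
          rw [this, Nat.factorization_div ⟨A', hA'⟩]
        have hval : A'.factorization q = A.factorization q - p.factorization q := by
          rw [hfd]; rfl
        have hpq0 : p.factorization q = 0 := by
          rw [hp.factorization]
          exact Finsupp.single_eq_of_ne' (fun h => hqp h.symm)
        rw [hval, hpq0, Nat.sub_zero]
        exact hfac q hq hq3
      obtain ⟨f', g', hfg, hf', hg'⟩ := IH A' hA'lt B w hA'pos hB hfac' hENw
      refine ⟨π * f', g', ?_, ?_, hg'⟩
      · rw [hw, hfg, mul_assoc]
      · rw [EN_mul, hπ, hf', hA']

theorem stmt_11 (z : Eisen) (A B : ℕ) (hA : 0 < A) (hB : 0 < B)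
    (r t : ℕ) (hrt : A = r ^ 2 * t) (ht : ∀ p : ℕ, p.Prime → p % 3 = 2 → ¬ p ∣ t)
    (hN : Complex.normSq (z : ℂ) = (A : ℝ) * B) :
    ∃ f g : Eisen, z = f * g ∧ Complex.normSq (f : ℂ) = A ∧ Complex.normSq (g : ℂ) = B := by
  have hEN : EN z = A * B := by
    rw [EN_eq_iff]
    push_cast
    exact hN
  have hr0 : r ≠ 0 := by rintro rfl; simp at hrt; omega
  have ht0 : t ≠ 0 := by rintro rfl; simp at hrt; omega
  have hfac : ∀ q, Nat.Prime q → q % 3 = 2 → Even (A.factorization q) := by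
    intro q hq hq3
    rw [hrt, Nat.factorization_mul (pow_ne_zero 2 hr0) ht0, Nat.factorization_pow]
    have h1 : t.factorization q = 0 := Nat.factorization_eq_zero_of_not_dvd (ht q hq hq3)
    have : (r ^ 2 * t).factorization q = 2 * r.factorization q + t.factorization q := by
      rw [Nat.factorization_mul (pow_ne_zero 2 hr0) ht0, Nat.factorization_pow]
      rfl
    simp only [Finsupp.add_apply, Finsupp.smul_apply, smul_eq_mul, h1, add_zero]
    exact ⟨r.factorization q, by ring⟩
  obtain ⟨f, g, hfg, hf, hg⟩ := main_ind A B z hA hB hfac hEN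
  refine ⟨f, g, hfg, ?_, ?_⟩
  · rw [EN_spec, hf]
  · rw [EN_spec, hg]
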